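/- Abstract Polya–Vinogradov completion lemma: Let q ≥ 2 and let F : Z/qZ → ℂ be a function whose Fourier coefficients F̂(t) = Σ_{u mod q} F(u)·e(-tu/q) satisfy |F̂(0)| ≤ A and |F̂(t)| ≤ B·gcd(t,q)^{1/2} for all t ≢ 0 mod q. Then for every M ≥ 1, |Σ_{1 ≤ m ≤ M} F(m)| ≤ A·M/q + C·B·d(q)·log(2q) for an absolute constant C, where d(q) is the divisor function. -/

import Mathlib

open Finset

/-- `e(x) = exp(2πix)` -/
noncomputable def e (x : ℂ) : ℂ := Complex.exp (2 * Real.pi * Complex.I * x)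

lemma e_eq_zpow (q : ℕ) (n : ℤ) :
    e ((n : ℂ) / q) = Complex.exp (2 * Real.pi * Complex.I / q) ^ n := by
  rw [e, ← Complex.exp_int_mul]; congr 1; ring

lemma orth (q : ℕ) (hq : q ≠ 0) (k : ℤ) :
    ∑ t ∈ Finset.range q, Complex.exp (2 * Real.pi * Complex.I / q) ^ ((t : ℤ) * k) =
      if (q : ℤ) ∣ k then (q : ℂ) else 0 := by
  have hprim : IsPrimitiveRoot (Complex.exp (2 * Real.pi * Complex.I / q)) q :=
    Complex.isPrimitiveRoot_exp q hq
  set ζ := Complex.exp (2 * Real.pi * Complex.I / q) with hζ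
  have hrw : ∀ t : ℕ, ζ ^ ((t : ℤ) * k) = (ζ ^ k) ^ t := by
    intro t; rw [mul_comm, zpow_mul, zpow_natCast]
  simp_rw [hrw]
  split_ifs with hdvd
  · have : ζ ^ k = 1 := (hprim.zpow_eq_one_iff_dvd k).mpr hdvd
    simp [this]
  · have hne : ζ ^ k ≠ 1 := fun h => hdvd ((hprim.zpow_eq_one_iff_dvd k).mp h)
    rw [geom_sum_eq hne]
    have : (ζ ^ k) ^ q = 1 := by
      rw [← zpow_natCast, ← zpow_mul, mul_comm, zpow_mul, zpow_natCast, hprim.pow_eq_one, one_zpow]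
    simp [this]

lemma key (q : ℕ) (hq : q ≠ 0) (F : ZMod q → ℂ) (M : ℕ) :
    ∑ t ∈ Finset.range q,
        (∑ u ∈ Finset.range q, F (u : ZMod q) * e (-((t * u : ℂ) / q))) *
          (∑ m ∈ Finset.Icc 1 M, e ((t * m : ℂ) / q))
      = (q : ℂ) * ∑ m ∈ Finset.Icc 1 M, F (m : ZMod q) := by
  set ζ := Complex.exp (2 * Real.pi * Complex.I / q) with hζ
  have hζne : ζ ≠ 0 := Complex.exp_ne_zero _
  have h1 : ∀ t u : ℕ, e (-((t * u : ℂ) / q)) = ζ ^ (-(t * u : ℤ)) := by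
    intro t u
    rw [← e_eq_zpow q (-(t * u : ℤ))]
    push_cast
    rw [neg_div]
  have h2 : ∀ t m : ℕ, e ((t * m : ℂ) / q) = ζ ^ ((t * m : ℤ)) := by
    intro t m
    rw [← e_eq_zpow q ((t * m : ℤ))]
    push_cast
    ring_nf
  calc
    ∑ t ∈ Finset.range q,
        (∑ u ∈ Finset.range q, F (u : ZMod q) * e (-((t * u : ℂ) / q))) *
          (∑ m ∈ Finset.Icc 1 M, e ((t * m : ℂ) / q))
        = ∑ t ∈ Finset.range q, ∑ u ∈ Finset.range q, ∑ m ∈ Finset.Icc 1 M,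
            F (u : ZMod q) * ζ ^ ((t : ℤ) * ((m : ℤ) - (u : ℤ))) := by
          simp_rw [h1, h2, Finset.sum_mul, Finset.mul_sum]
          refine Finset.sum_congr rfl fun t _ => Finset.sum_congr rfl fun u _ =>
            Finset.sum_congr rfl fun m _ => ?_
          rw [mul_assoc, ← zpow_add₀ hζne]
          congr 2
          ring
    _ = ∑ u ∈ Finset.range q, ∑ m ∈ Finset.Icc 1 M,
          F (u : ZMod q) * ∑ t ∈ Finset.range q, ζ ^ ((t : ℤ) * ((m : ℤ) - (u : ℤ))) := by
          rw [Finset.sum_comm]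
          refine Finset.sum_congr rfl fun u _ => ?_
          rw [Finset.sum_comm]
          exact Finset.sum_congr rfl fun m _ => (Finset.mul_sum _ _ _).symm
    _ = ∑ m ∈ Finset.Icc 1 M, ∑ u ∈ Finset.range q,
          F (u : ZMod q) * (if (q : ℤ) ∣ ((m : ℤ) - (u : ℤ)) then (q : ℂ) else 0) := by
          rw [Finset.sum_comm]
          exact Finset.sum_congr rfl fun m _ => Finset.sum_congr rfl fun u _ => by
            rw [orth q hq]
    _ = ∑ m ∈ Finset.Icc 1 M, (q : ℂ) * F (m : ZMod q) := by
          refine Finset.sum_congr rfl fun m _ => ?_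
          rw [Finset.sum_eq_single (m % q)]
          · have hc : (q : ℤ) ∣ (m : ℤ) - ((m % q : ℕ) : ℤ) :=
              (Nat.modEq_iff_dvd.mp (Nat.mod_modEq m q))
            rw [if_pos hc, ZMod.natCast_mod, mul_comm]
          · intro u hu hne
            have hcond : ¬ (q : ℤ) ∣ (m : ℤ) - (u : ℤ) := by
              intro hdvd
              have : u ≡ m [MOD q] := Nat.modEq_iff_dvd.mpr hdvd
              have : u % q = m % q := this
              rw [Nat.mod_eq_of_lt (Finset.mem_range.mp hu)] at this
              exact hne this
            rw [if_neg hcond, mul_zero]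
          · intro h
            exact absurd (Finset.mem_range.mpr (Nat.mod_lt m (Nat.pos_of_ne_zero hq))) h
    _ = (q : ℂ) * ∑ m ∈ Finset.Icc 1 M, F (m : ZMod q) := by
          rw [Finset.mul_sum]

lemma abs_exp_sub_one (θ : ℝ) :
    ‖Complex.exp ((θ : ℂ) * Complex.I) - 1‖ = 2 * |Real.sin (θ / 2)| := by
  rw [Complex.norm_def, Complex.normSq_apply]
  have hre : (Complex.exp ((θ : ℂ) * Complex.I) - 1).re = Real.cos θ - 1 := by
    simp [Complex.exp_ofReal_mul_I_re]
  have him : (Complex.exp ((θ : ℂ) * Complex.I) - 1).im = Real.sin θ := by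
    simp [Complex.exp_ofReal_mul_I_im]
  rw [hre, him]
  have h1 := Real.sin_sq_eq_half_sub (θ / 2)
  rw [show 2 * (θ / 2) = θ by ring] at h1
  have h2 : Real.sin θ ^ 2 + Real.cos θ ^ 2 = 1 := Real.sin_sq_add_cos_sq θ
  have h3 : |Real.sin (θ / 2)| ^ 2 = Real.sin (θ / 2) ^ 2 := sq_abs _
  have h4 : (Real.cos θ - 1) * (Real.cos θ - 1) + Real.sin θ * Real.sin θ
      = (2 * |Real.sin (θ / 2)|) ^ 2 := by nlinarith [h1, h2, h3]
  rw [h4, Real.sqrt_sq (by positivity)]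

lemma geom_bound (w : ℂ) (hw : ‖w‖ = 1) (hw1 : w ≠ 1) (M : ℕ) :
    ‖∑ m ∈ Finset.Icc 1 M, w ^ m‖ ≤ 2 / ‖w - 1‖ := by
  have hpos : 0 < ‖w - 1‖ := norm_pos_iff.mpr (sub_ne_zero.mpr hw1)
  rw [← Finset.Ico_add_one_right_eq_Icc, geom_sum_Ico hw1 (by omega : 1 ≤ M + 1), norm_div,
    div_le_div_iff_of_pos_right hpos]
  calc ‖w ^ (M + 1) - w ^ 1‖
      ≤ ‖w ^ (M + 1)‖ + ‖w ^ 1‖ := by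
        have h := norm_sub_le (w ^ (M + 1)) (w ^ 1)
        exact h
    _ = 2 := by rw [norm_pow, norm_pow, hw]; norm_num

lemma inv_sin_le (q t : ℕ) (h1 : 1 ≤ t) (h2 : t < q) :
    1 / Real.sin (Real.pi * t / q) ≤ q / (2 * t) + q / (2 * ((q : ℝ) - t)) := by
  have hq0 : (0 : ℝ) < q := by
    have hh : 0 < q := by omega
    exact_mod_cast hh
  have ht0 : (0 : ℝ) < t := by exact_mod_cast h1
  have htq : (t : ℝ) < q := by exact_mod_cast h2
  have hqt0 : (0 : ℝ) < (q : ℝ) - t := by linarith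
  have hx0 : 0 < Real.pi * t / q := by positivity
  have hxpi : Real.pi * t / q < Real.pi := by
    rw [div_lt_iff₀ hq0]
    have := Real.pi_pos
    nlinarith
  have hsin0 : 0 < Real.sin (Real.pi * t / q) := Real.sin_pos_of_pos_of_lt_pi hx0 hxpi
  rcases le_or_gt (2 * t) q with hc | hc
  · have harg : Real.pi * t / q ≤ Real.pi / 2 := by
      rw [div_le_div_iff₀ hq0 (by norm_num : (0:ℝ) < 2)]
      have h2t : (2 : ℝ) * t ≤ q := by exact_mod_cast hc
      nlinarith [Real.pi_pos]
    have hlb : 2 * (t : ℝ) / q ≤ Real.sin (Real.pi * t / q) := by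
      have := Real.mul_le_sin (x := Real.pi * t / q) hx0.le harg
      have hpi := Real.pi_pos
      calc 2 * (t : ℝ) / q = 2 / Real.pi * (Real.pi * t / q) := by field_simp
        _ ≤ _ := this
    have hlb0 : 0 < 2 * (t : ℝ) / q := by positivity
    calc 1 / Real.sin (Real.pi * t / q) ≤ 1 / (2 * (t : ℝ) / q) :=
        one_div_le_one_div_of_le hlb0 hlb
      _ = q / (2 * t) := by field_simp
      _ ≤ q / (2 * t) + q / (2 * ((q : ℝ) - t)) := by
          have : 0 ≤ (q : ℝ) / (2 * ((q : ℝ) - t)) := by positivity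
          linarith
  · have hsin_eq : Real.sin (Real.pi * t / q) = Real.sin (Real.pi * ((q : ℝ) - t) / q) := by
      rw [show Real.pi * ((q : ℝ) - t) / q = Real.pi - Real.pi * t / q by field_simp,
        Real.sin_pi_sub]
    have harg0 : 0 ≤ Real.pi * ((q : ℝ) - t) / q := by positivity
    have harg : Real.pi * ((q : ℝ) - t) / q ≤ Real.pi / 2 := by
      rw [div_le_div_iff₀ hq0 (by norm_num : (0:ℝ) < 2)]
      have h2t : (q : ℝ) < 2 * t := by exact_mod_cast hc
      nlinarith [Real.pi_pos]
    have hlb : 2 * ((q : ℝ) - t) / q ≤ Real.sin (Real.pi * t / q) := by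
      rw [hsin_eq]
      have := Real.mul_le_sin harg0 harg
      calc 2 * ((q : ℝ) - t) / q = 2 / Real.pi * (Real.pi * ((q : ℝ) - t) / q) := by
            field_simp
        _ ≤ _ := this
    have hlb0 : 0 < 2 * ((q : ℝ) - t) / q := by positivity
    calc 1 / Real.sin (Real.pi * t / q) ≤ 1 / (2 * ((q : ℝ) - t) / q) :=
        one_div_le_one_div_of_le hlb0 hlb
      _ = q / (2 * ((q : ℝ) - t)) := by field_simp
      _ ≤ q / (2 * t) + q / (2 * ((q : ℝ) - t)) := by
          have : 0 ≤ (q : ℝ) / (2 * (t : ℝ)) := by positivity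
          linarith

lemma gcd_q_sub (q t : ℕ) (h2 : t ≤ q) : Nat.gcd (q - t) q = Nat.gcd t q := by
  calc Nat.gcd (q - t) q = Nat.gcd (q - t) (q - (q - t)) := by
        rw [Nat.gcd_sub_self_right (Nat.sub_le q t)]
    _ = Nat.gcd (q - t) t := by rw [Nat.sub_sub_self h2]
    _ = Nat.gcd q t := Nat.gcd_sub_self_left h2
    _ = Nat.gcd t q := Nat.gcd_comm _ _

lemma refl_sum (q : ℕ) :
    ∑ t ∈ Finset.Ico 1 q, Real.sqrt (Nat.gcd t q) / ((q : ℝ) - t)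
      = ∑ t ∈ Finset.Ico 1 q, Real.sqrt (Nat.gcd t q) / t := by
  refine Finset.sum_nbij' (fun t => q - t) (fun t => q - t) ?_ ?_ ?_ ?_ ?_
  · intro a ha
    simp only [Finset.mem_Ico] at ha ⊢
    omega
  · intro a ha
    simp only [Finset.mem_Ico] at ha ⊢
    omega
  · intro a ha
    simp only [Finset.mem_Ico] at ha
    show q - (q - a) = a
    omega
  · intro a ha
    simp only [Finset.mem_Ico] at ha
    show q - (q - a) = a
    omega
  · intro a ha
    simp only [Finset.mem_Ico] at ha
    show Real.sqrt (Nat.gcd a q) / ((q : ℝ) - a) = Real.sqrt (Nat.gcd (q - a) q) / ((q - a : ℕ) : ℝ)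
    rw [gcd_q_sub q a (by omega), Nat.cast_sub (by omega)]

lemma divisor_sum (q : ℕ) (hq : 2 ≤ q) :
    ∑ t ∈ Finset.Ico 1 q, Real.sqrt (Nat.gcd t q) / t
      ≤ q.divisors.card * (1 + Real.log q) := by
  have hq0 : q ≠ 0 := by omega
  set i : ℕ → ℕ × ℕ := fun t => (Nat.gcd t q, t / Nat.gcd t q) with hi
  have hmem : ∀ t ∈ Finset.Ico 1 q, i t ∈ q.divisors ×ˢ Finset.Icc 1 q := by
    intro t ht
    simp only [Finset.mem_Ico] at ht
    have ht0 : 0 < t := ht.1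
    have hd0 : 0 < Nat.gcd t q := Nat.gcd_pos_of_pos_left q ht0
    simp only [Finset.mem_product, Nat.mem_divisors, Finset.mem_Icc, hi]
    refine ⟨⟨Nat.gcd_dvd_right t q, hq0⟩, ?_, ?_⟩
    · exact Nat.div_pos (Nat.le_of_dvd ht0 (Nat.gcd_dvd_left t q)) hd0
    · exact le_trans (Nat.div_le_self t _) (by omega)
  have hinj : Set.InjOn i (Finset.Ico 1 q) := by
    intro a ha b hb hab
    have h1 : Nat.gcd a q = Nat.gcd b q := congrArg Prod.fst hab
    have h2 : a / Nat.gcd a q = b / Nat.gcd b q := congrArg Prod.snd hab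
    have ha' : Nat.gcd a q * (a / Nat.gcd a q) = a :=
      Nat.mul_div_cancel' (Nat.gcd_dvd_left a q)
    have hb' : Nat.gcd b q * (b / Nat.gcd b q) = b :=
      Nat.mul_div_cancel' (Nat.gcd_dvd_left b q)
    rw [← ha', ← hb', h2, h1]
  have hpt : ∀ t ∈ Finset.Ico 1 q,
      Real.sqrt (Nat.gcd t q) / t ≤ (fun p : ℕ × ℕ => 1 / (p.2 : ℝ)) (i t) := by
    intro t ht
    simp only [Finset.mem_Ico] at ht
    have ht0 : 0 < t := ht.1
    have hd0 : 0 < Nat.gcd t q := Nat.gcd_pos_of_pos_left q ht0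
    have hs0 : 0 < t / Nat.gcd t q :=
      Nat.div_pos (Nat.le_of_dvd ht0 (Nat.gcd_dvd_left t q)) hd0
    have hteq : (t : ℝ) = (Nat.gcd t q : ℝ) * ((t / Nat.gcd t q : ℕ) : ℝ) := by
      rw [← Nat.cast_mul, Nat.mul_div_cancel' (Nat.gcd_dvd_left t q)]
    show Real.sqrt (Nat.gcd t q) / t ≤ 1 / ((t / Nat.gcd t q : ℕ) : ℝ)
    rw [hteq]
    have hd1 : (1 : ℝ) ≤ (Nat.gcd t q : ℝ) := by exact_mod_cast hd0
    have hs1 : (1 : ℝ) ≤ ((t / Nat.gcd t q : ℕ) : ℝ) := by exact_mod_cast hs0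
    have hsqrt : Real.sqrt (Nat.gcd t q) ≤ (Nat.gcd t q : ℝ) := by
      nlinarith [Real.sq_sqrt (by linarith : (0:ℝ) ≤ ((Nat.gcd t q : ℕ) : ℝ)),
        Real.sqrt_nonneg ((Nat.gcd t q : ℕ) : ℝ)]
    rw [div_le_div_iff₀ (by nlinarith) (by linarith)]
    nlinarith [Real.sqrt_nonneg ((Nat.gcd t q : ℕ) : ℝ)]
  have hharm : ∑ s ∈ Finset.Icc 1 q, 1 / (s : ℝ) ≤ 1 + Real.log q := by
    have h1 : ∑ s ∈ Finset.Icc 1 q, 1 / (s : ℝ) = ((harmonic q : ℚ) : ℝ) := by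
      rw [harmonic_eq_sum_Icc]
      push_cast
      simp [one_div]
    rw [h1]
    exact harmonic_le_one_add_log q
  calc ∑ t ∈ Finset.Ico 1 q, Real.sqrt (Nat.gcd t q) / t
      ≤ ∑ t ∈ Finset.Ico 1 q, (fun p : ℕ × ℕ => 1 / (p.2 : ℝ)) (i t) :=
        Finset.sum_le_sum hpt
    _ = ∑ p ∈ (Finset.Ico 1 q).image i, 1 / (p.2 : ℝ) := by
        rw [Finset.sum_image (fun a ha b hb h => hinj ha hb h)]
    _ ≤ ∑ p ∈ q.divisors ×ˢ Finset.Icc 1 q, 1 / (p.2 : ℝ) := by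
        refine Finset.sum_le_sum_of_subset_of_nonneg ?_ ?_
        · intro p hp
          obtain ⟨t, ht, rfl⟩ := Finset.mem_image.mp hp
          exact hmem t ht
        · intro p _ _
          positivity
    _ = (q.divisors.card : ℝ) * ∑ s ∈ Finset.Icc 1 q, 1 / (s : ℝ) := by
        rw [Finset.sum_product]
        simp [Finset.sum_const, nsmul_eq_mul]
    _ ≤ q.divisors.card * (1 + Real.log q) := by
        gcongr

/-- Abstract Polya–Vinogradov completion lemma. -/
theorem stmt8 :
    ∃ C : ℝ, 0 < C ∧ ∀ (q : ℕ), 2 ≤ q → ∀ (F : ZMod q → ℂ) (A B : ℝ),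
      ‖∑ u ∈ Finset.range q, F (u : ZMod q)‖ ≤ A →
      (∀ t ∈ Finset.range q, t ≠ 0 →
        ‖∑ u ∈ Finset.range q, F (u : ZMod q) * e (-((t * u : ℂ) / q))‖ ≤
          B * Real.sqrt (Nat.gcd t q)) →
      ∀ M : ℕ, 1 ≤ M →
        ‖∑ m ∈ Finset.Icc 1 M, F (m : ZMod q)‖ ≤
          A * M / q + C * B * q.divisors.card * Real.log (2 * q) := by
  refine ⟨2, by norm_num, ?_⟩
  intro q hq F A B hA hB M hM
  have hq0 : q ≠ 0 := by omega
  have hqR : (0 : ℝ) < q := by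
    have : 0 < q := by omega
    exact_mod_cast this
  -- nonnegativity of A and B
  have hA0 : 0 ≤ A := le_trans (norm_nonneg _) hA
  have hB0 : 0 ≤ B := by
    have h1 := hB 1 (Finset.mem_range.mpr (by omega)) one_ne_zero
    have : (0 : ℝ) ≤ B * Real.sqrt (Nat.gcd 1 q) := le_trans (norm_nonneg _) h1
    rwa [Nat.gcd_one_left, Nat.cast_one, Real.sqrt_one, mul_one] at this
  -- notation
  set Fh : ℕ → ℂ := fun t => ∑ u ∈ Finset.range q, F (u : ZMod q) * e (-((t * u : ℂ) / q))
    with hFh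
  set G : ℕ → ℂ := fun t => ∑ m ∈ Finset.Icc 1 M, e ((t * m : ℂ) / q) with hG
  have hkey := key q hq0 F M
  -- split off t = 0
  have hsplit : ∑ t ∈ Finset.range q, Fh t * G t
      = Fh 0 * G 0 + ∑ t ∈ Finset.Ico 1 q, Fh t * G t := by
    rw [Finset.range_eq_Ico, Finset.sum_eq_sum_Ico_succ_bot (by omega : 0 < q)]
  -- G 0 = M
  have hG0 : G 0 = (M : ℂ) := by
    have h1 : ∀ m ∈ Finset.Icc 1 M, e ((((0:ℕ) : ℂ) * m) / q) = (1 : ℂ) := by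
      intro m _
      norm_num [e]
    simp only [hG]
    rw [Finset.sum_congr rfl h1, Finset.sum_const, Nat.card_Icc]
    simp
  -- bound for each t in Ico 1 q
  have hterm : ∀ t ∈ Finset.Ico 1 q, ‖Fh t * G t‖
      ≤ B * Real.sqrt (Nat.gcd t q) * ((q : ℝ) / (2 * t) + (q : ℝ) / (2 * ((q : ℝ) - t))) := by
    intro t ht
    simp only [Finset.mem_Ico] at ht
    obtain ⟨ht1, htq⟩ := ht
    set θ : ℝ := 2 * Real.pi * t / q with hθ
    set w : ℂ := Complex.exp ((θ : ℂ) * Complex.I) with hw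
    have hwG : ∀ m : ℕ, e ((t * m : ℂ) / q) = w ^ m := by
      intro m
      rw [hw, e, ← Complex.exp_nat_mul]
      congr 1
      rw [hθ]
      push_cast
      ring
    have habs_w : ‖w‖ = 1 := by
      rw [hw]
      exact Complex.norm_exp_ofReal_mul_I θ
    have hsin0 : 0 < Real.sin (Real.pi * t / q) := by
      apply Real.sin_pos_of_pos_of_lt_pi
      · positivity
      · rw [div_lt_iff₀ hqR]
        have htqR : (t : ℝ) < q := by exact_mod_cast htq
        nlinarith [Real.pi_pos]
    have habs_w1 : ‖w - 1‖ = 2 * Real.sin (Real.pi * t / q) := by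
      rw [hw, abs_exp_sub_one θ]
      rw [show θ / 2 = Real.pi * t / q by rw [hθ]; ring]
      rw [abs_of_pos hsin0]
    have hw1 : w ≠ 1 := by
      intro h
      rw [h] at habs_w1
      simp at habs_w1
      linarith
    have hGbound : ‖G t‖ ≤ 1 / Real.sin (Real.pi * t / q) := by
      have := geom_bound w habs_w hw1 M
      rw [habs_w1] at this
      calc ‖G t‖ = ‖∑ m ∈ Finset.Icc 1 M, w ^ m‖ := by
            rw [hG]
            congr 1
            exact Finset.sum_congr rfl fun m _ => hwG m
        _ ≤ 2 / (2 * Real.sin (Real.pi * t / q)) := this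
        _ = 1 / Real.sin (Real.pi * t / q) := by
            rw [div_eq_div_iff (by linarith) (by linarith)]
            ring
    have hFhb : ‖Fh t‖ ≤ B * Real.sqrt (Nat.gcd t q) :=
      hB t (Finset.mem_range.mpr htq) (by omega)
    rw [norm_mul]
    calc ‖Fh t‖ * ‖G t‖
        ≤ (B * Real.sqrt (Nat.gcd t q)) * (1 / Real.sin (Real.pi * t / q)) := by
          apply mul_le_mul hFhb hGbound (norm_nonneg _)
          positivity
      _ ≤ (B * Real.sqrt (Nat.gcd t q)) * ((q : ℝ) / (2 * t) + (q : ℝ) / (2 * ((q : ℝ) - t))) := by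
          apply mul_le_mul_of_nonneg_left (inv_sin_le q t ht1 htq)
          positivity
  -- sum the bounds
  have hsum_bound : ∑ t ∈ Finset.Ico 1 q,
      B * Real.sqrt (Nat.gcd t q) * ((q : ℝ) / (2 * t) + (q : ℝ) / (2 * ((q : ℝ) - t)))
      = B * q * ∑ t ∈ Finset.Ico 1 q, Real.sqrt (Nat.gcd t q) / t := by
    have hptw : ∀ t : ℕ,
        B * Real.sqrt (Nat.gcd t q) * ((q : ℝ) / (2 * t) + (q : ℝ) / (2 * ((q : ℝ) - t)))
        = B * q * (Real.sqrt (Nat.gcd t q) / t) / 2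
          + B * q * (Real.sqrt (Nat.gcd t q) / ((q : ℝ) - t)) / 2 := by
      intro t
      field_simp
    rw [Finset.sum_congr rfl fun t _ => hptw t, Finset.sum_add_distrib]
    rw [← Finset.sum_div, ← Finset.sum_div, ← Finset.mul_sum, ← Finset.mul_sum, refl_sum q]
    ring
  have hdiv := divisor_sum q hq
  -- log bounds
  have hlog1 : (1 : ℝ) ≤ Real.log (2 * q) := by
    rw [Real.le_log_iff_exp_le (by positivity)]
    have h4 : (4 : ℝ) ≤ 2 * q := by
      have : (2 : ℝ) ≤ q := by exact_mod_cast hq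
      linarith
    have := Real.exp_one_lt_d9
    linarith
  have hlog2 : Real.log q ≤ Real.log (2 * q) := by
    apply Real.log_le_log (by positivity)
    linarith
  have hlogsum : 1 + Real.log q ≤ 2 * Real.log (2 * q) := by linarith
  -- put everything together
  have hmain : (q : ℝ) * ‖∑ m ∈ Finset.Icc 1 M, F (m : ZMod q)‖
      ≤ A * M + 2 * B * q.divisors.card * Real.log (2 * q) * q := by
    have h1 : (q : ℝ) * ‖∑ m ∈ Finset.Icc 1 M, F (m : ZMod q)‖
        = ‖∑ t ∈ Finset.range q, Fh t * G t‖ := by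
      rw [hkey, norm_mul, Complex.norm_natCast]
    rw [h1, hsplit]
    calc ‖Fh 0 * G 0 + ∑ t ∈ Finset.Ico 1 q, Fh t * G t‖
        ≤ ‖Fh 0 * G 0‖ + ‖∑ t ∈ Finset.Ico 1 q, Fh t * G t‖ := by
          have h := norm_add_le (Fh 0 * G 0) (∑ t ∈ Finset.Ico 1 q, Fh t * G t)
          exact h
      _ ≤ A * M + 2 * B * q.divisors.card * Real.log (2 * q) * q := by
          have hb1 : ‖Fh 0 * G 0‖ ≤ A * M := by
            rw [norm_mul, hG0, Complex.norm_natCast]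
            apply mul_le_mul ?_ le_rfl (by positivity) hA0
            · have : Fh 0 = ∑ u ∈ Finset.range q, F (u : ZMod q) := by
                rw [hFh]
                refine Finset.sum_congr rfl fun u _ => ?_
                norm_num [e]
              rw [this]
              exact hA
          have hb2 : ‖∑ t ∈ Finset.Ico 1 q, Fh t * G t‖
              ≤ 2 * B * q.divisors.card * Real.log (2 * q) * q := by
            calc ‖∑ t ∈ Finset.Ico 1 q, Fh t * G t‖
                ≤ ∑ t ∈ Finset.Ico 1 q, ‖Fh t * G t‖ := by
                  have h := norm_sum_le (Finset.Ico 1 q) (fun t => Fh t * G t)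
                  exact h
              _ ≤ ∑ t ∈ Finset.Ico 1 q,
                    B * Real.sqrt (Nat.gcd t q) * ((q : ℝ) / (2 * t) + (q : ℝ) / (2 * ((q : ℝ) - t))) :=
                  Finset.sum_le_sum hterm
              _ = B * q * ∑ t ∈ Finset.Ico 1 q, Real.sqrt (Nat.gcd t q) / t := hsum_bound
              _ ≤ B * q * (q.divisors.card * (1 + Real.log q)) := by
                  apply mul_le_mul_of_nonneg_left hdiv (by positivity)
              _ ≤ B * q * (q.divisors.card * (2 * Real.log (2 * q))) := by
                  apply mul_le_mul_of_nonneg_left ?_ (by positivity)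
                  apply mul_le_mul_of_nonneg_left hlogsum (by positivity)
              _ = 2 * B * q.divisors.card * Real.log (2 * q) * q := by ring
          linarith
  -- divide by q
  calc ‖∑ m ∈ Finset.Icc 1 M, F (m : ZMod q)‖
      = (q : ℝ) * ‖∑ m ∈ Finset.Icc 1 M, F (m : ZMod q)‖ / q := by
        field_simp
    _ ≤ (A * M + 2 * B * q.divisors.card * Real.log (2 * q) * q) / q := by
        apply div_le_div_of_nonneg_right hmain hqR.le
    _ = A * M / q + 2 * B * q.divisors.card * Real.log (2 * q) := by
        rw [add_div, mul_div_cancel_right₀ _ (ne_of_gt hqR)]
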